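/- arXiv:2106.11211 — 5 statements merged into one kernel-verified Lean document; each statement's English description precedes it below -/
import Mathlib

section
/- Let (Ω, F, P) be a probability space with random variables X (covariates), Y (labels), and a binary indicator S. Define the propensity score e(X) := P(S = 1 | X). If (i) the conditional distribution of Y given X is the same on {S=1} and {S=0} (covariate shift assumption) and (ii) 0 < e(X) < 1 almost surely, then the conditional joint distribution of (X, Y) given e(X) on {S=1} equals the conditional joint distribution of (X, Y) given e(X) on {S=0}. -/
open MeasureTheory ProbabilityTheory
open scoped ENNReal

section StratLearnAux

variable {α β : Type*} {mα : MeasurableSpace α} {mβ : MeasurableSpace β}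

lemma sl_map_withDensity_comp (μ : Measure α) {g : α → β} (hg : Measurable g)
    {f : β → ℝ≥0∞} (hf : Measurable f) :
    (μ.withDensity (fun a => f (g a))).map g = (μ.map g).withDensity f := by
  ext B hB
  rw [Measure.map_apply hg hB, withDensity_apply _ (hg hB), withDensity_apply _ hB,
    setLIntegral_map hB hf hg]

lemma sl_compProd_condDistrib {Ω' : Type*} [MeasurableSpace Ω'] [StandardBorelSpace Ω']
    [Nonempty Ω'] {μ : Measure α} [IsFiniteMeasure μ] {X : α → β} {Y : α → Ω'}
    (hY : Measurable Y) :
    (μ.map X) ⊗ₘ condDistrib Y X μ = μ.map (fun a => (X a, Y a)) := by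
  rw [condDistrib, ← Measure.fst_map_prodMk hY]
  exact (μ.map fun a => (X a, Y a)).disintegrate _

lemma sl_cond_measure {Ω 𝓧 : Type*} [MeasurableSpace Ω] [MeasurableSpace 𝓧]
    (P : Measure Ω) [IsProbabilityMeasure P] {X : Ω → 𝓧} (hX : Measurable X)
    {s : Set Ω} (hs : MeasurableSet s) {g : 𝓧 → ℝ} (hg : Measurable g)
    (hg01 : ∀ᵐ ω ∂P, g (X ω) ∈ Set.Icc (0:ℝ) 1)
    (hPS : (fun ω => g (X ω)) =ᵐ[P]
      P[s.indicator (fun _ => (1:ℝ)) | MeasurableSpace.comap X inferInstance])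
    {A : Set 𝓧} (hA : MeasurableSet A) :
    P (s ∩ X ⁻¹' A) = ∫⁻ ω in X ⁻¹' A, ENNReal.ofReal (g (X ω)) ∂P := by
  have hE : MeasurableSet (X ⁻¹' A) := hX hA
  have hEm : MeasurableSet[MeasurableSpace.comap X inferInstance] (X ⁻¹' A) := ⟨A, hA, rfl⟩
  have hint : Integrable (s.indicator (fun _ => (1:ℝ))) P := (integrable_const 1).indicator hs
  have h1 : ∫ ω in X ⁻¹' A, s.indicator (fun _ => (1:ℝ)) ω ∂P = (P (s ∩ X ⁻¹' A)).toReal := by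
    rw [setIntegral_indicator hs, setIntegral_const, Set.inter_comm]
    simp
    rfl
  have h2 : ∫ ω in X ⁻¹' A, g (X ω) ∂P
      = ∫ ω in X ⁻¹' A, s.indicator (fun _ => (1:ℝ)) ω ∂P := by
    refine (setIntegral_congr_ae hE (hPS.mono fun ω h _ => h)).trans ?_
    exact setIntegral_condExp hX.comap_le hint hEm
  have h3 : ∫ ω in X ⁻¹' A, g (X ω) ∂P
      = (∫⁻ ω in X ⁻¹' A, ENNReal.ofReal (g (X ω)) ∂P).toReal := by
    rw [integral_eq_lintegral_of_nonneg_ae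
      (ae_restrict_of_ae (hg01.mono fun ω h => h.1))
      ((hg.comp hX).aestronglyMeasurable.restrict)]
  have hfin : ∫⁻ ω in X ⁻¹' A, ENNReal.ofReal (g (X ω)) ∂P ≠ ⊤ := by
    have hb : ∀ᵐ ω ∂P, ENNReal.ofReal (g (X ω)) ≤ 1 :=
      hg01.mono fun ω h => ENNReal.ofReal_le_one.2 h.2
    refine ne_top_of_le_ne_top ?_ (lintegral_mono_ae (ae_restrict_of_ae hb))
    simp only [lintegral_one, Measure.restrict_apply_univ]
    exact measure_ne_top _ _
  refine (ENNReal.toReal_eq_toReal_iff' (measure_ne_top _ _) hfin).1 ?_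
  rw [← h1, ← h2, h3]

variable {𝓧 𝓨 : Type*} [MeasurableSpace 𝓧] [MeasurableSpace 𝓨]

lemma sl_left (m : Measure 𝓧) [IsFiniteMeasure m] {e : 𝓧 → ℝ} (he : Measurable e)
    {d : ℝ → ℝ≥0∞} (hd : Measurable d) (κ : Kernel ℝ (𝓧 × 𝓨)) [IsMarkovKernel κ]
    {B : Set ℝ} (hB : MeasurableSet B) {A : Set (𝓧 × 𝓨)} (hA : MeasurableSet A) :
    (((m.map e).withDensity d) ⊗ₘ κ) (B ×ˢ A)
      = ∫⁻ x in e ⁻¹' B, d (e x) * κ (e x) A ∂m := by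
  rw [Measure.compProd_apply (hB.prod hA)]
  have h1 : ∀ t, κ t (Prod.mk t ⁻¹' (B ×ˢ A)) = B.indicator (fun t => κ t A) t := by
    intro t; by_cases h : t ∈ B <;> simp [Set.mk_preimage_prod_right_eq_if, h]
  simp_rw [h1]
  rw [lintegral_indicator hB _,
    setLIntegral_withDensity_eq_setLIntegral_mul _ hd (Kernel.measurable_coe κ hA) hB]
  simp only [Pi.mul_apply]
  exact setLIntegral_map hB (hd.mul (Kernel.measurable_coe κ hA)) he

lemma sl_right (m : Measure 𝓧) [SFinite m] {e : 𝓧 → ℝ} (he : Measurable e)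
    {d : ℝ → ℝ≥0∞} (hd : Measurable d) (η : Kernel 𝓧 𝓨) [IsSFiniteKernel η]
    {B : Set ℝ} (hB : MeasurableSet B) {A : Set (𝓧 × 𝓨)} (hA : MeasurableSet A) :
    (((m.withDensity (fun x => d (e x))) ⊗ₘ η).map (fun p : 𝓧 × 𝓨 => (e p.1, p))) (B ×ˢ A)
      = ∫⁻ x in e ⁻¹' B, d (e x) * η x (Prod.mk x ⁻¹' A) ∂m := by
  have hφ : Measurable (fun p : 𝓧 × 𝓨 => (e p.1, p)) :=
    (he.comp measurable_fst).prodMk measurable_id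
  have hpre : (fun p : 𝓧 × 𝓨 => (e p.1, p)) ⁻¹' (B ×ˢ A)
      = ((fun p : 𝓧 × 𝓨 => e p.1) ⁻¹' B) ∩ A := by
    ext p; simp [Set.mem_prod]
  have hpm : MeasurableSet (((fun p : 𝓧 × 𝓨 => e p.1) ⁻¹' B) ∩ A) :=
    ((he.comp measurable_fst) hB).inter hA
  rw [Measure.map_apply hφ (hB.prod hA), hpre, Measure.compProd_apply hpm]
  have h1 : ∀ x, η x (Prod.mk x ⁻¹' (((fun p : 𝓧 × 𝓨 => e p.1) ⁻¹' B) ∩ A))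
      = (e ⁻¹' B).indicator (fun x => η x (Prod.mk x ⁻¹' A)) x := by
    intro x; by_cases h : e x ∈ B
    · rw [Set.indicator_of_mem (show x ∈ e ⁻¹' B from h)]
      congr 1
      ext y; simp [h]
    · rw [Set.indicator_of_notMem (show x ∉ e ⁻¹' B from h)]
      have : Prod.mk x ⁻¹' (((fun p : 𝓧 × 𝓨 => e p.1) ⁻¹' B) ∩ A) = ∅ := by
        ext y; simp [h]
      simp [this]
  simp_rw [h1]
  rw [lintegral_indicator (he hB) _,
    setLIntegral_withDensity_eq_setLIntegral_mul _
      (show Measurable fun x => d (e x) from hd.comp he)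
      (Kernel.measurable_kernel_prodMk_left hA) (he hB)]
  simp only [Pi.mul_apply]

end StratLearnAux

set_option maxHeartbeats 2000000 in
/-- Proposition 1 (learning conditional on the propensity score): under covariate shift
(`p_S(y|x) = p_T(y|x)`) and `0 < e(X) < 1` a.s., the conditional joint distribution of `(X, Y)`
given the propensity score `e(X)` is the same in the source (`S = 1`) and target (`S = 0`)
domains. -/
theorem stratlearn_prop1
    {Ω 𝓧 𝓨 : Type*} [MeasurableSpace Ω]
    [MeasurableSpace 𝓧] [StandardBorelSpace 𝓧] [Nonempty 𝓧]
    [MeasurableSpace 𝓨] [StandardBorelSpace 𝓨] [Nonempty 𝓨]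
    (P : Measure Ω) [IsProbabilityMeasure P]
    (X : Ω → 𝓧) (Y : Ω → 𝓨) (S : Ω → Bool)
    (hX : Measurable X) (hY : Measurable Y) (hS : Measurable S)
    (hS1 : P {ω | S ω = true} ≠ 0) (hS0 : P {ω | S ω = false} ≠ 0)
    (e : 𝓧 → ℝ) (he : Measurable e)
    -- e(X) is a version of the propensity score P(S = 1 | X)
    (hePS : (fun ω => e (X ω)) =ᵐ[P]
      P[(fun ω => if S ω then (1 : ℝ) else 0) | MeasurableSpace.comap X inferInstance])
    -- 0 < e(X) < 1 almost surely
    (he01 : ∀ᵐ ω ∂P, e (X ω) ∈ Set.Ioo (0 : ℝ) 1)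
    -- covariate shift: the conditional law of Y given X is the same on {S=1} and {S=0}
    (hCS : ∀ᵐ x ∂(P.map X),
      condDistrib Y X (P[|{ω | S ω = true}]) x = condDistrib Y X (P[|{ω | S ω = false}]) x) :
    -- conclusion: the conditional joint law of (X, Y) given e(X) is the same
    -- in the source and target domains
    ∀ᵐ t ∂(P.map (fun ω => e (X ω))),
      condDistrib (fun ω => (X ω, Y ω)) (fun ω => e (X ω)) (P[|{ω | S ω = true}]) t
        = condDistrib (fun ω => (X ω, Y ω)) (fun ω => e (X ω)) (P[|{ω | S ω = false}]) t := by
  have hs1m : MeasurableSet {ω | S ω = true} := hS (measurableSet_singleton true)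
  have hs0m : MeasurableSet {ω | S ω = false} := hS (measurableSet_singleton false)
  haveI hP1p : IsProbabilityMeasure (P[|{ω | S ω = true}]) := cond_isProbabilityMeasure hS1
  haveI hP0p : IsProbabilityMeasure (P[|{ω | S ω = false}]) := cond_isProbabilityMeasure hS0
  have hW : Measurable fun ω => e (X ω) := he.comp hX
  have hZ : Measurable fun ω => (X ω, Y ω) := hX.prodMk hY
  have hc1t : P {ω | S ω = true} ≠ ⊤ := measure_ne_top _ _
  have hc0t : P {ω | S ω = false} ≠ ⊤ := measure_ne_top _ _
  -- indicator forms of the propensity hypothesis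
  have hind1 : (fun ω => if S ω then (1:ℝ) else 0)
      = Set.indicator {ω | S ω = true} (fun _ => (1:ℝ)) := by
    funext ω; cases h : S ω <;> simp [Set.indicator_apply, h]
  have hePS1 : (fun ω => e (X ω)) =ᵐ[P]
      P[Set.indicator {ω | S ω = true} (fun _ => (1:ℝ)) |
        MeasurableSpace.comap X inferInstance] := by
    rw [← hind1]; exact hePS
  have hf_int : Integrable (fun ω => if S ω then (1:ℝ) else 0) P := by
    rw [hind1]; exact (integrable_const 1).indicator hs1m
  have hePS0 : (fun ω => 1 - e (X ω)) =ᵐ[P]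
      P[Set.indicator {ω | S ω = false} (fun _ => (1:ℝ)) |
        MeasurableSpace.comap X inferInstance] := by
    have hind0 : Set.indicator {ω | S ω = false} (fun _ => (1:ℝ))
        = (fun _ => (1:ℝ)) - (fun ω => if S ω then (1:ℝ) else 0) := by
      funext ω; cases h : S ω <;> simp [Set.indicator_apply, h]
    have hsub := condExp_sub (m := MeasurableSpace.comap X inferInstance) (μ := P)
      (integrable_const (1:ℝ)) hf_int
    rw [hind0]
    refine Filter.EventuallyEq.trans ?_ hsub.symm
    rw [condExp_const hX.comap_le]
    filter_upwards [hePS] with ω h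
    simp only [Pi.sub_apply, ← h]
  -- densities of the conditional distributions of X
  have hee1 : ∀ᵐ ω ∂P, e (X ω) ∈ Set.Icc (0:ℝ) 1 :=
    he01.mono fun ω h => ⟨h.1.le, h.2.le⟩
  have hee0 : ∀ᵐ ω ∂P, (fun x => 1 - e x) (X ω) ∈ Set.Icc (0:ℝ) 1 :=
    he01.mono fun ω h => ⟨by simp [h.2.le], by simp [h.1.le]⟩
  have D1 : (P {ω | S ω = true}) • (P[|{ω | S ω = true}]).map X
      = (P.map X).withDensity (fun x => ENNReal.ofReal (e x)) := by
    ext A hA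
    rw [Measure.smul_apply, Measure.map_apply hX hA, cond_apply hs1m, smul_eq_mul, ← mul_assoc,
      ENNReal.mul_inv_cancel hS1 hc1t, one_mul, withDensity_apply _ hA,
      setLIntegral_map hA (show Measurable fun x => ENNReal.ofReal (e x) from ENNReal.measurable_ofReal.comp he) hX]
    exact sl_cond_measure P hX hs1m he hee1 hePS1 hA
  have D0 : (P {ω | S ω = false}) • (P[|{ω | S ω = false}]).map X
      = (P.map X).withDensity (fun x => ENNReal.ofReal (1 - e x)) := by
    ext A hA
    rw [Measure.smul_apply, Measure.map_apply hX hA, cond_apply hs0m, smul_eq_mul, ← mul_assoc,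
      ENNReal.mul_inv_cancel hS0 hc0t, one_mul, withDensity_apply _ hA,
      setLIntegral_map hA (show Measurable fun x => ENNReal.ofReal (1 - e x) from ENNReal.measurable_ofReal.comp (measurable_const.sub he)) hX]
    exact sl_cond_measure P hX hs0m (measurable_const.sub he) hee0 hePS0 hA
  -- densities at the level of the propensity score
  have hd1 : Measurable fun t : ℝ => ENNReal.ofReal t := ENNReal.measurable_ofReal
  have hd0 : Measurable fun t : ℝ => ENNReal.ofReal (1 - t) :=
    ENNReal.measurable_ofReal.comp (measurable_const.sub measurable_id)
  have D1W : (P {ω | S ω = true}) • (P[|{ω | S ω = true}]).map (fun ω => e (X ω))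
      = ((P.map X).map e).withDensity (fun t => ENNReal.ofReal t) := by
    have hmm1 : (P[|{ω | S ω = true}]).map (fun ω => e (X ω))
        = ((P[|{ω | S ω = true}]).map X).map e := (Measure.map_map he hX).symm
    rw [hmm1, ← Measure.map_smul, D1]
    exact sl_map_withDensity_comp _ he hd1
  have D0W : (P {ω | S ω = false}) • (P[|{ω | S ω = false}]).map (fun ω => e (X ω))
      = ((P.map X).map e).withDensity (fun t => ENNReal.ofReal (1 - t)) := by
    have hmm0 : (P[|{ω | S ω = false}]).map (fun ω => e (X ω))
        = ((P[|{ω | S ω = false}]).map X).map e := (Measure.map_map he hX).symm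
    rw [hmm0, ← Measure.map_smul, D0]
    exact sl_map_withDensity_comp _ he hd0
  -- abbreviations for the kernels
  set m : Measure 𝓧 := P.map X with hm
  set η1 : Kernel 𝓧 𝓨 := condDistrib Y X (P[|{ω | S ω = true}]) with hη1
  set η0 : Kernel 𝓧 𝓨 := condDistrib Y X (P[|{ω | S ω = false}]) with hη0
  set κ1 : Kernel ℝ (𝓧 × 𝓨) :=
    condDistrib (fun ω => (X ω, Y ω)) (fun ω => e (X ω)) (P[|{ω | S ω = true}]) with hκ1
  set κ0 : Kernel ℝ (𝓧 × 𝓨) :=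
    condDistrib (fun ω => (X ω, Y ω)) (fun ω => e (X ω)) (P[|{ω | S ω = false}]) with hκ0
  have hφ : Measurable (fun p : 𝓧 × 𝓨 => (e p.1, p)) :=
    (he.comp measurable_fst).prodMk measurable_id
  -- disintegration identities
  have K1X : ((P[|{ω | S ω = true}]).map X) ⊗ₘ η1
      = (P[|{ω | S ω = true}]).map (fun ω => (X ω, Y ω)) := sl_compProd_condDistrib hY
  have K0X : ((P[|{ω | S ω = false}]).map X) ⊗ₘ η0
      = (P[|{ω | S ω = false}]).map (fun ω => (X ω, Y ω)) := sl_compProd_condDistrib hY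
  have K1W : ((P[|{ω | S ω = true}]).map (fun ω => e (X ω))) ⊗ₘ κ1
      = (P[|{ω | S ω = true}]).map (fun ω => (e (X ω), (X ω, Y ω))) :=
    sl_compProd_condDistrib hZ
  have K0W : ((P[|{ω | S ω = false}]).map (fun ω => e (X ω))) ⊗ₘ κ0
      = (P[|{ω | S ω = false}]).map (fun ω => (e (X ω), (X ω, Y ω))) :=
    sl_compProd_condDistrib hZ
  have hmapφ : ∀ (μ : Measure Ω), μ.map (fun ω => (e (X ω), (X ω, Y ω)))
      = (μ.map (fun ω => (X ω, Y ω))).map (fun p : 𝓧 × 𝓨 => (e p.1, p)) :=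
    fun μ => (Measure.map_map hφ hZ).symm
  have hIooX : ∀ᵐ x ∂m, e x ∈ Set.Ioo (0:ℝ) 1 :=
    (ae_map_iff hX.aemeasurable (he measurableSet_Ioo)).2 he01
  -- the key identity in the source (S = false) domain
  have star0 : ∀ {B : Set ℝ}, MeasurableSet B → ∀ {A : Set (𝓧 × 𝓨)}, MeasurableSet A →
      ∫⁻ x in e ⁻¹' B, ENNReal.ofReal (1 - e x) * η1 x (Prod.mk x ⁻¹' A) ∂m
      = ∫⁻ x in e ⁻¹' B, ENNReal.ofReal (1 - e x) * κ0 (e x) A ∂m := by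
    intro B hB A hA
    have hswitch : ∫⁻ x in e ⁻¹' B, ENNReal.ofReal (1 - e x) * η1 x (Prod.mk x ⁻¹' A) ∂m
        = ∫⁻ x in e ⁻¹' B, ENNReal.ofReal (1 - e x) * η0 x (Prod.mk x ⁻¹' A) ∂m :=
      lintegral_congr_ae (ae_restrict_of_ae (hCS.mono fun x h => by dsimp only; rw [h]))
    have hMeq : ((m.withDensity fun x => ENNReal.ofReal (1 - e x)) ⊗ₘ η0).map
          (fun p : 𝓧 × 𝓨 => (e p.1, p))
        = ((m.map e).withDensity fun t => ENNReal.ofReal (1 - t)) ⊗ₘ κ0 := by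
      rw [← D0, Measure.compProd_smul_left, K0X, Measure.map_smul, ← hmapφ, ← K0W,
        ← Measure.compProd_smul_left, D0W]
    have happ := congrArg (fun ν : Measure (ℝ × (𝓧 × 𝓨)) => ν (B ×ˢ A)) hMeq
    rw [hswitch, ← sl_right m he hd0 η0 hB hA, ← sl_left m he hd0 κ0 hB hA]
    exact happ
  -- transfer the identity to the weight e(x) by a change of density
  have star1 : ∀ {B : Set ℝ}, MeasurableSet B → ∀ {A : Set (𝓧 × 𝓨)}, MeasurableSet A →
      ∫⁻ x in e ⁻¹' B, ENNReal.ofReal (e x) * η1 x (Prod.mk x ⁻¹' A) ∂m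
      = ∫⁻ x in e ⁻¹' B, ENNReal.ofReal (e x) * κ0 (e x) A ∂m := by
    intro B hB A hA
    have hh1 : Measurable fun x => η1 x (Prod.mk x ⁻¹' A) :=
      Kernel.measurable_kernel_prodMk_left hA
    have hh2 : Measurable fun x => κ0 (e x) A := (Kernel.measurable_coe _ hA).comp he
    have hν : ((m.withDensity (fun x => ENNReal.ofReal (1 - e x) * η1 x (Prod.mk x ⁻¹' A))).map e)
        = ((m.withDensity (fun x => ENNReal.ofReal (1 - e x) * κ0 (e x) A)).map e) := by
      ext B' hB'
      rw [Measure.map_apply he hB', Measure.map_apply he hB',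
        withDensity_apply _ (he hB'), withDensity_apply _ (he hB')]
      exact star0 hB' hA
    set F : ℝ → ℝ≥0∞ := B.indicator (fun t => ENNReal.ofReal t / ENNReal.ofReal (1 - t))
      with hFdef
    have hFm : Measurable F := (Measurable.div hd1 hd0).indicator hB
    have key : ∫⁻ t, F t
          ∂((m.withDensity (fun x => ENNReal.ofReal (1 - e x) * η1 x (Prod.mk x ⁻¹' A))).map e)
        = ∫⁻ t, F t
          ∂((m.withDensity (fun x => ENNReal.ofReal (1 - e x) * κ0 (e x) A)).map e) := by
      rw [hν]
    rw [lintegral_map hFm he, lintegral_map hFm he,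
      lintegral_withDensity_eq_lintegral_mul _
        (show Measurable fun x => ENNReal.ofReal (1 - e x) * η1 x (Prod.mk x ⁻¹' A) from (hd0.comp he).mul hh1)
        (show Measurable fun x => F (e x) from hFm.comp he),
      lintegral_withDensity_eq_lintegral_mul _
        (show Measurable fun x => ENNReal.ofReal (1 - e x) * κ0 (e x) A from (hd0.comp he).mul hh2)
        (show Measurable fun x => F (e x) from hFm.comp he)] at key
    have hrw : ∀ h : 𝓧 → ℝ≥0∞,
        ∀ᵐ x ∂m, ((fun x => ENNReal.ofReal (1 - e x) * h x) * fun x => F (e x)) x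
          = (e ⁻¹' B).indicator (fun x => ENNReal.ofReal (e x) * h x) x := by
      intro h
      filter_upwards [hIooX] with x hx
      simp only [Pi.mul_apply]
      by_cases hxB : e x ∈ B
      · rw [hFdef, Set.indicator_of_mem hxB, Set.indicator_of_mem (show x ∈ e ⁻¹' B from hxB)]
        have h0 : ENNReal.ofReal (1 - e x) ≠ 0 := by
          simp only [ne_eq, ENNReal.ofReal_eq_zero, not_le]
          linarith [hx.2]
        have htop : ENNReal.ofReal (1 - e x) ≠ ⊤ := ENNReal.ofReal_ne_top
        calc ENNReal.ofReal (1 - e x) * h x * (ENNReal.ofReal (e x) / ENNReal.ofReal (1 - e x))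
            = ENNReal.ofReal (e x) / ENNReal.ofReal (1 - e x) * ENNReal.ofReal (1 - e x) * h x :=
              by ring
          _ = ENNReal.ofReal (e x) * h x := by rw [ENNReal.div_mul_cancel h0 htop]
      · rw [hFdef, Set.indicator_of_notMem (show x ∉ e ⁻¹' B from hxB),
          Set.indicator_of_notMem hxB]
        simp
    rw [lintegral_congr_ae (hrw _), lintegral_congr_ae (hrw _),
      lintegral_indicator (he hB) _, lintegral_indicator (he hB) _] at key
    exact key
  -- the disintegration of the source law by κ0
  have T1 : (P[|{ω | S ω = true}]).map (fun ω => (e (X ω), (X ω, Y ω)))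
      = ((P[|{ω | S ω = true}]).map (fun ω => e (X ω))) ⊗ₘ κ0 := by
    haveI : IsProbabilityMeasure
        ((P[|{ω | S ω = true}]).map (fun ω => (e (X ω), (X ω, Y ω)))) :=
      Measure.isProbabilityMeasure_map (hW.prodMk hZ).aemeasurable
    haveI : IsProbabilityMeasure ((P[|{ω | S ω = true}]).map (fun ω => e (X ω))) :=
      Measure.isProbabilityMeasure_map hW.aemeasurable
    refine MeasureTheory.ext_of_generate_finite _ generateFrom_prod.symm isPiSystem_prod ?_ (by simp)
    rintro _ ⟨B, hB, A, hA, rfl⟩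
    have hL : P {ω | S ω = true} * ((P[|{ω | S ω = true}]).map
          (fun ω => (e (X ω), (X ω, Y ω))) (B ×ˢ A))
        = ∫⁻ x in e ⁻¹' B, ENNReal.ofReal (e x) * η1 x (Prod.mk x ⁻¹' A) ∂m := by
      have hm1 : (P {ω | S ω = true}) • (P[|{ω | S ω = true}]).map
            (fun ω => (e (X ω), (X ω, Y ω)))
          = ((m.withDensity (fun x => ENNReal.ofReal (e x))) ⊗ₘ η1).map
            (fun p : 𝓧 × 𝓨 => (e p.1, p)) := by
        rw [hmapφ, ← Measure.map_smul, ← K1X, ← Measure.compProd_smul_left, D1]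
      have h3 := congrArg (fun ν : Measure (ℝ × (𝓧 × 𝓨)) => ν (B ×ˢ A)) hm1
      simp only [Measure.smul_apply, smul_eq_mul] at h3
      exact h3.trans (sl_right m he hd1 η1 hB hA)
    have hR : P {ω | S ω = true} * ((((P[|{ω | S ω = true}]).map (fun ω => e (X ω))) ⊗ₘ κ0)
          (B ×ˢ A))
        = ∫⁻ x in e ⁻¹' B, ENNReal.ofReal (e x) * κ0 (e x) A ∂m := by
      have hm2 : (P {ω | S ω = true}) • (((P[|{ω | S ω = true}]).map (fun ω => e (X ω))) ⊗ₘ κ0)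
          = ((m.map e).withDensity (fun t => ENNReal.ofReal t)) ⊗ₘ κ0 := by
        rw [← Measure.compProd_smul_left, D1W]
      have h3 := congrArg (fun ν : Measure (ℝ × (𝓧 × 𝓨)) => ν (B ×ˢ A)) hm2
      simp only [Measure.smul_apply, smul_eq_mul] at h3
      exact h3.trans (sl_left m he hd1 κ0 hB hA)
    have hc : P {ω | S ω = true} * ((P[|{ω | S ω = true}]).map
          (fun ω => (e (X ω), (X ω, Y ω))) (B ×ˢ A))
        = P {ω | S ω = true} * ((((P[|{ω | S ω = true}]).map (fun ω => e (X ω))) ⊗ₘ κ0)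
          (B ×ˢ A)) := hL.trans ((star1 hB hA).trans hR.symm)
    have h4 := congrArg (fun x => (P {ω | S ω = true})⁻¹ * x) hc
    simpa [← mul_assoc, ENNReal.inv_mul_cancel hS1 hc1t] using h4
  -- a.e. uniqueness of the conditional distribution
  have huniq := condDistrib_ae_eq_of_measure_eq_compProd (fun ω => e (X ω)) hZ.aemeasurable T1
  -- absolute continuity of P.map (e ∘ X) w.r.t. the source domain
  have hIooW : ∀ᵐ t ∂(P.map (fun ω => e (X ω))), t ∈ Set.Ioo (0:ℝ) 1 :=
    (ae_map_iff hW.aemeasurable measurableSet_Ioo).2 he01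
  have hmapPW : P.map (fun ω => e (X ω)) = m.map e := (Measure.map_map he hX).symm
  have hAC : P.map (fun ω => e (X ω)) ≪ (P[|{ω | S ω = true}]).map (fun ω => e (X ω)) := by
    have hACwd : P.map (fun ω => e (X ω))
        ≪ (P.map (fun ω => e (X ω))).withDensity (fun t => ENNReal.ofReal t) :=
      withDensity_absolutelyContinuous' hd1.aemeasurable
        (hIooW.mono fun t ht => by
          simp only [ne_eq, ENNReal.ofReal_eq_zero, not_le]
          exact ht.1)
    refine hACwd.trans ?_
    have h1 : (P.map (fun ω => e (X ω))).withDensity (fun t => ENNReal.ofReal t)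
        = (P {ω | S ω = true}) • (P[|{ω | S ω = true}]).map (fun ω => e (X ω)) := by
      rw [hmapPW, D1W]
    rw [h1]
    exact Measure.AbsolutelyContinuous.mk fun s hs h0 => by
      simp [Measure.smul_apply, h0]
  have hfinal : ∀ᵐ t ∂((P[|{ω | S ω = true}]).map (fun ω => e (X ω))), κ1 t = κ0 t :=
    huniq.mono fun t h => h
  exact hfinal.filter_mono hAC.ae_le
end

section
/- (Rosenbaum–Rubin balancing property) Let X be a random variable and S a binary indicator with propensity score e(X) := P(S = 1 | X) satisfying 0 < e(X) < 1 a.s. Then X is conditionally independent of S given e(X); equivalently, P(S = 1 | X, e(X)) = P(S = 1 | e(X)) almost surely. -/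
open MeasureTheory ProbabilityTheory

/-- Rosenbaum–Rubin balancing property (Theorem 1 of Rosenbaum & Rubin 1983): if
`e(X) = P(S = 1 | X)` satisfies `0 < e(X) < 1` a.s., then `X` is conditionally independent of
the binary indicator `S` given the propensity score `e(X)`. -/
theorem balancing_property
    {Ω 𝓧 : Type*} [MeasurableSpace Ω] [StandardBorelSpace Ω] [Nonempty Ω]
    [MeasurableSpace 𝓧]
    (P : Measure Ω) [IsProbabilityMeasure P]
    (X : Ω → 𝓧) (S : Ω → Bool)
    (hX : Measurable X) (hS : Measurable S)
    (e : 𝓧 → ℝ) (he : Measurable e)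
    -- e(X) is a version of the propensity score P(S = 1 | X)
    (hePS : (fun ω => e (X ω)) =ᵐ[P]
      P[(fun ω => if S ω then (1 : ℝ) else 0) | MeasurableSpace.comap X inferInstance])
    -- 0 < e(X) < 1 almost surely
    (he01 : ∀ᵐ ω ∂P, e (X ω) ∈ Set.Ioo (0 : ℝ) 1) :
    -- X ⫫ S ∣ e(X)
    CondIndepFun (MeasurableSpace.comap (fun ω => e (X ω)) inferInstance)
      (Measurable.comap_le (he.comp hX)) X S P := by
  have hmX : MeasurableSpace.comap X inferInstance ≤ (inferInstance : MeasurableSpace Ω) :=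
    hX.comap_le
  have hle : (MeasurableSpace.comap (fun ω => e (X ω)) inferInstance) ≤ (MeasurableSpace.comap X inferInstance) := by
    rintro _ ⟨u, hu, rfl⟩
    exact ⟨e ⁻¹' u, he hu, rfl⟩
  have heX_meas : Measurable[(MeasurableSpace.comap (fun ω => e (X ω)) inferInstance)] (fun ω => e (X ω)) := Measurable.of_comap_le le_rfl
  have heX_bdd : ∀ᵐ ω ∂P, ‖e (X ω)‖ ≤ 1 := by
    filter_upwards [he01] with ω hω
    rw [Real.norm_eq_abs, abs_le]
    exact ⟨by linarith [hω.1], le_of_lt hω.2⟩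
  -- integrability of indicators
  have hint : ∀ (A : Set Ω), MeasurableSet A →
      Integrable (A.indicator fun _ => (1 : ℝ)) P :=
    fun A hA => (integrable_const (1 : ℝ)).indicator hA
  have hSt : MeasurableSet (S ⁻¹' {true}) := hS (by trivial)
  -- The indicator of {S = true} is the function in hePS
  have hind : (S ⁻¹' {true}).indicator (fun _ => (1 : ℝ))
      = fun ω => if S ω then (1 : ℝ) else 0 := by
    ext ω
    by_cases h : S ω <;> simp [Set.indicator_apply, h]
  -- Key computation: P⟦X⁻¹'s ∩ {S = true} | (MeasurableSpace.comap (fun ω => e (X ω)) inferInstance)⟧ = P⟦X⁻¹'s | (MeasurableSpace.comap (fun ω => e (X ω)) inferInstance)⟧ * e(X) a.e.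
  have key : ∀ s : Set 𝓧, MeasurableSet s →
      (P⟦X ⁻¹' s ∩ S ⁻¹' {true} | (MeasurableSpace.comap (fun ω => e (X ω)) inferInstance)⟧) =ᵐ[P]
        fun ω => (P⟦X ⁻¹' s | (MeasurableSpace.comap (fun ω => e (X ω)) inferInstance)⟧) ω * e (X ω) := by
    intro s hs
    have hA : MeasurableSet (X ⁻¹' s) := hX hs
    have hAmX : MeasurableSet[(MeasurableSpace.comap X inferInstance)] (X ⁻¹' s) := ⟨s, hs, rfl⟩
    -- step 1: tower property
    have h1 : (P⟦X ⁻¹' s ∩ S ⁻¹' {true} | (MeasurableSpace.comap (fun ω => e (X ω)) inferInstance)⟧)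
        =ᵐ[P] P[P[(X ⁻¹' s ∩ S ⁻¹' {true}).indicator fun _ => (1 : ℝ) | (MeasurableSpace.comap X inferInstance)] | (MeasurableSpace.comap (fun ω => e (X ω)) inferInstance)] :=
      (condExp_condExp_of_le hle hmX).symm
    -- step 2: inner condexp
    have hprod : (X ⁻¹' s ∩ S ⁻¹' {true}).indicator (fun _ => (1 : ℝ))
        = ((X ⁻¹' s).indicator fun _ => (1 : ℝ)) * ((S ⁻¹' {true}).indicator fun _ => (1 : ℝ)) := by
      ext ω
      by_cases h1 : ω ∈ X ⁻¹' s <;> by_cases h2 : ω ∈ S ⁻¹' {true} <;>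
        simp [Set.indicator_apply, h1, h2]
    have h2 : P[(X ⁻¹' s ∩ S ⁻¹' {true}).indicator fun _ => (1 : ℝ) | (MeasurableSpace.comap X inferInstance)]
        =ᵐ[P] fun ω => ((X ⁻¹' s).indicator (fun _ => (1 : ℝ)) ω) * e (X ω) := by
      rw [hprod]
      refine (condExp_mul_of_stronglyMeasurable_left
        ((stronglyMeasurable_const (β := ℝ)).indicator hAmX)
        ?_ (hint _ hSt)).trans ?_
      · rw [← hprod]; exact hint _ (hA.inter hSt)
      · filter_upwards [hePS] with ω hω
        simp only [Pi.mul_apply]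
        rw [hind, ← hω]
    -- step 3: outer condexp via pull-out of e(X)
    have h3 : P[(fun ω => ((X ⁻¹' s).indicator (fun _ => (1 : ℝ)) ω) * e (X ω)) | (MeasurableSpace.comap (fun ω => e (X ω)) inferInstance)]
        =ᵐ[P] fun ω => (P⟦X ⁻¹' s | (MeasurableSpace.comap (fun ω => e (X ω)) inferInstance)⟧) ω * e (X ω) := by
      have hcomm : (fun ω => ((X ⁻¹' s).indicator (fun _ => (1 : ℝ)) ω) * e (X ω))
          = (fun ω => e (X ω)) * ((X ⁻¹' s).indicator fun _ => (1 : ℝ)) := by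
        ext ω; simp [mul_comm]
      rw [hcomm]
      refine (condExp_mul_of_stronglyMeasurable_left (heX_meas.stronglyMeasurable) ?_ (hint _ hA)).trans ?_
      · exact (hint _ hA).bdd_mul ((he.comp hX).aestronglyMeasurable) heX_bdd
      · filter_upwards with ω
        simp [mul_comm]
    calc (P⟦X ⁻¹' s ∩ S ⁻¹' {true} | (MeasurableSpace.comap (fun ω => e (X ω)) inferInstance)⟧)
        =ᵐ[P] P[P[(X ⁻¹' s ∩ S ⁻¹' {true}).indicator fun _ => (1 : ℝ) | (MeasurableSpace.comap X inferInstance)] | (MeasurableSpace.comap (fun ω => e (X ω)) inferInstance)] := h1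
      _ =ᵐ[P] P[(fun ω => ((X ⁻¹' s).indicator (fun _ => (1 : ℝ)) ω) * e (X ω)) | (MeasurableSpace.comap (fun ω => e (X ω)) inferInstance)] :=
          condExp_congr_ae h2
      _ =ᵐ[P] fun ω => (P⟦X ⁻¹' s | (MeasurableSpace.comap (fun ω => e (X ω)) inferInstance)⟧) ω * e (X ω) := h3
  -- consequence: P⟦{S = true} | (MeasurableSpace.comap (fun ω => e (X ω)) inferInstance)⟧ = e(X) a.e.
  have huniv : (P⟦(Set.univ : Set Ω) | (MeasurableSpace.comap (fun ω => e (X ω)) inferInstance)⟧) =ᵐ[P] fun _ => (1 : ℝ) := by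
    have : (Set.univ : Set Ω).indicator (fun _ => (1 : ℝ)) = fun _ => (1 : ℝ) := by
      ext ω; simp
    rw [this]
    exact Filter.EventuallyEq.of_eq <| condExp_const (μ := P) (hle.trans hmX) (1 : ℝ)
  have hX_univ : X ⁻¹' (Set.univ : Set 𝓧) = Set.univ := Set.preimage_univ
  have hStrue : (P⟦S ⁻¹' {true} | (MeasurableSpace.comap (fun ω => e (X ω)) inferInstance)⟧) =ᵐ[P] fun ω => e (X ω) := by
    have := key Set.univ MeasurableSet.univ
    rw [hX_univ, Set.univ_inter] at this
    refine this.trans ?_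
    filter_upwards [huniv] with ω hω
    rw [hω, one_mul]
  have hSfalse_set : S ⁻¹' {false} = (S ⁻¹' {true})ᶜ := by
    ext ω; cases h : S ω <;> simp [h]
  have hSfalse : (P⟦S ⁻¹' {false} | (MeasurableSpace.comap (fun ω => e (X ω)) inferInstance)⟧) =ᵐ[P] fun ω => 1 - e (X ω) := by
    have hsub : (S ⁻¹' {false}).indicator (fun _ => (1 : ℝ))
        = ((Set.univ : Set Ω).indicator fun _ => (1 : ℝ))
          - ((S ⁻¹' {true}).indicator fun _ => (1 : ℝ)) := by
      ext ω; cases h : S ω <;> simp [Set.indicator_apply, h]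
    rw [hsub]
    refine (condExp_sub (hint _ MeasurableSet.univ) (hint _ hSt) _).trans ?_
    filter_upwards [huniv, hStrue] with ω h1 h2
    simp only [Pi.sub_apply]
    rw [h1, h2]
  have keyf : ∀ s : Set 𝓧, MeasurableSet s →
      (P⟦X ⁻¹' s ∩ S ⁻¹' {false} | (MeasurableSpace.comap (fun ω => e (X ω)) inferInstance)⟧) =ᵐ[P]
        fun ω => (P⟦X ⁻¹' s | (MeasurableSpace.comap (fun ω => e (X ω)) inferInstance)⟧) ω * (1 - e (X ω)) := by
    intro s hs
    have hA : MeasurableSet (X ⁻¹' s) := hX hs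
    have hsub : (X ⁻¹' s ∩ S ⁻¹' {false}).indicator (fun _ => (1 : ℝ))
        = ((X ⁻¹' s).indicator fun _ => (1 : ℝ))
          - ((X ⁻¹' s ∩ S ⁻¹' {true}).indicator fun _ => (1 : ℝ)) := by
      ext ω
      by_cases h1 : ω ∈ X ⁻¹' s <;> cases h : S ω <;> simp [Set.indicator_apply, h1, h]
    rw [hsub]
    refine (condExp_sub (hint _ hA) (hint _ (hA.inter hSt)) _).trans ?_
    filter_upwards [key s hs] with ω h1
    simp only [Pi.sub_apply]
    rw [h1]; ring
  -- now the main argument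
  rw [condIndepFun_iff_condExp_inter_preimage_eq_mul hX hS]
  intro s t hs _
  by_cases ht1 : true ∈ t <;> by_cases ht0 : false ∈ t
  · have htu : S ⁻¹' t = Set.univ := by
      ext ω; cases h : S ω <;> simp [h, ht1, ht0]
    rw [htu, Set.inter_univ]
    filter_upwards [huniv] with ω hω
    rw [hω, mul_one]
  · have htu : S ⁻¹' t = S ⁻¹' {true} := by
      ext ω; cases h : S ω <;> simp [h, ht1, ht0]
    rw [htu]
    filter_upwards [key s hs, hStrue] with ω h1 h2
    rw [h1, h2]
  · have htu : S ⁻¹' t = S ⁻¹' {false} := by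
      ext ω; cases h : S ω <;> simp [h, ht1, ht0]
    rw [htu]
    filter_upwards [keyf s hs, hSfalse] with ω h1 h2
    rw [h1, h2]
  · have htu : S ⁻¹' t = ∅ := by
      ext ω; cases h : S ω <;> simp [h, ht1, ht0]
    rw [htu, Set.inter_empty]
    simp only [Set.indicator_empty]
    rw [show (fun _ : Ω => (0:ℝ)) = (0 : Ω → ℝ) from rfl, condExp_zero]
    filter_upwards with ω
    simp
end

section
/- Let b(X) be any measurable function of X such that X is conditionally independent of S given b(X) (i.e., b is a balancing score). Then the propensity score e(X) = P(S=1|X) is a measurable function of b(X) (up to almost-sure equality). -/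
open MeasureTheory ProbabilityTheory

/-- The propensity score is the coarsest balancing score: if `b(X)` is a balancing score,
i.e. `X ⫫ S ∣ b(X)`, then the propensity score `e(X) = P(S = 1 | X)` is (up to almost-sure
equality) a measurable function of `b(X)`. -/
theorem propensity_coarsest_balancing_score
    {Ω 𝓧 𝓑 : Type*} [MeasurableSpace Ω] [StandardBorelSpace Ω] [Nonempty Ω]
    [MeasurableSpace 𝓧] [MeasurableSpace 𝓑]
    (P : Measure Ω) [IsProbabilityMeasure P]
    (X : Ω → 𝓧) (S : Ω → Bool)
    (hX : Measurable X) (hS : Measurable S)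
    (e : 𝓧 → ℝ) (he : Measurable e)
    -- e(X) is a version of the propensity score P(S = 1 | X)
    (hePS : (fun ω => e (X ω)) =ᵐ[P]
      P[(fun ω => if S ω then (1 : ℝ) else 0) | MeasurableSpace.comap X inferInstance])
    -- b is a measurable function of X which is a balancing score: X ⫫ S ∣ b(X)
    (b : 𝓧 → 𝓑) (hb : Measurable b)
    (hbal : CondIndepFun (MeasurableSpace.comap (fun ω => b (X ω)) inferInstance)
      (Measurable.comap_le ((hb.comp hX))) X S P) :
    -- the propensity score is a measurable function of b(X), up to a.s. equality
    ∃ g : 𝓑 → ℝ, Measurable g ∧ (fun ω => e (X ω)) =ᵐ[P] fun ω => g (b (X ω)) := by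
  classical
  have hZm : Measurable (fun ω => b (X ω)) := hb.comp hX
  have hm'X : MeasurableSpace.comap (fun ω => b (X ω)) inferInstance ≤
      MeasurableSpace.comap X inferInstance := by
    have : MeasurableSpace.comap (fun ω => b (X ω)) inferInstance =
        MeasurableSpace.comap X (MeasurableSpace.comap b inferInstance) := by
      rw [MeasurableSpace.comap_comp]; rfl
    rw [this]
    exact MeasurableSpace.comap_mono (measurable_iff_comap_le.mp hb)
  have hA : MeasurableSet (S ⁻¹' {true}) := hS (measurableSet_singleton true)
  set f : Ω → ℝ := (S ⁻¹' {true}).indicator (fun _ => (1 : ℝ)) with hfdef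
  have hf_int : Integrable f P := (integrable_const (1 : ℝ)).indicator hA
  have hite : (fun ω => if S ω then (1 : ℝ) else 0) = f := by
    funext ω
    by_cases h : S ω <;> simp [hfdef, Set.indicator_apply, h]
  -- the key step: P[f|mX] = P[f|m'] a.s.
  have hprod := (condIndepFun_iff_condExp_inter_preimage_eq_mul (μ := P)
    (hm' := hZm.comap_le) hX hS).mp hbal
  have key : P[f | MeasurableSpace.comap (fun ω => b (X ω)) inferInstance] =ᵐ[P]
      P[f | MeasurableSpace.comap X inferInstance] := by
    set h : Ω → ℝ := P[f | MeasurableSpace.comap (fun ω => b (X ω)) inferInstance] with hhdef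
    refine ae_eq_condExp_of_forall_setIntegral_eq hX.comap_le hf_int
      (fun s _ _ => integrable_condExp.integrableOn) (fun s hs _ => ?_)
      ((StronglyMeasurable.mono (stronglyMeasurable_condExp (μ := P) (f := f)) hm'X).aestronglyMeasurable)
    obtain ⟨u, hu, rfl⟩ := hs
    set χ : Ω → ℝ := (X ⁻¹' u).indicator (fun _ => (1 : ℝ)) with hχdef
    have hχ_int : Integrable χ P := (integrable_const (1 : ℝ)).indicator (hX hu)
    have hhχ_int : Integrable (h * χ) P := by
      have : Integrable (fun x => χ x * h x) P := by
        refine integrable_condExp.bdd_mul (c := 1) ?_ (Filter.Eventually.of_forall fun x => ?_)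
        · exact ((stronglyMeasurable_const.indicator (hX hu))).aestronglyMeasurable
        · rw [hχdef]
          by_cases hx : x ∈ X ⁻¹' u <;> simp [Set.indicator_apply, hx]
      refine this.congr (Filter.Eventually.of_forall fun x => ?_)
      simp [mul_comm]
    -- LHS: ∫ x in X⁻¹u, h = ∫ h*χ = ∫ P[h*χ|m'] = ∫ h * P[χ|m']
    have hLHS : ∫ x in X ⁻¹' u, h x ∂P = ∫ x, (h * P[χ | MeasurableSpace.comap
        (fun ω => b (X ω)) inferInstance]) x ∂P := by
      have e1 : ∫ x in X ⁻¹' u, h x ∂P = ∫ x, (h * χ) x ∂P := by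
        rw [← integral_indicator (hX hu)]
        congr 1
        funext x
        by_cases hx : x ∈ X ⁻¹' u <;>
          simp [hχdef, Set.indicator_apply, hx, mul_comm]
      rw [e1, ← integral_condExp hZm.comap_le]
      refine integral_congr_ae ?_
      exact condExp_mul_of_stronglyMeasurable_left stronglyMeasurable_condExp hhχ_int hχ_int
    -- RHS: ∫ x in X⁻¹u, f = P(X⁻¹u ∩ A) = ∫ P[χ|m'] * h
    have hRHS : ∫ x in X ⁻¹' u, f x ∂P = ∫ x, (h * P[χ | MeasurableSpace.comap
        (fun ω => b (X ω)) inferInstance]) x ∂P := by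
      have e1 : ∫ x in X ⁻¹' u, f x ∂P = (P (X ⁻¹' u ∩ S ⁻¹' {true})).toReal := by
        rw [hfdef, setIntegral_indicator hA, setIntegral_const, smul_eq_mul, mul_one]; rfl
      have e2 : (P (X ⁻¹' u ∩ S ⁻¹' {true})).toReal
          = ∫ x, ((X ⁻¹' u ∩ S ⁻¹' {true}).indicator (fun _ => (1:ℝ))) x ∂P := by
        rw [integral_indicator ((hX hu).inter hA), setIntegral_const, smul_eq_mul, mul_one]; rfl
      have e3 := hprod u {true} hu (measurableSet_singleton true)
      rw [e1, e2, ← integral_condExp hZm.comap_le]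
      refine integral_congr_ae (e3.trans ?_)
      filter_upwards with x
      exact mul_comm _ _
    rw [hLHS, hRHS]
  -- represent P[f|m'] as a function of Z
  have hcd := condDistrib_ae_eq_condExp (μ := P) hZm hS (measurableSet_singleton true)
  refine ⟨fun v => (condDistrib S (fun ω => b (X ω)) P v {true}).toReal,
    (Kernel.measurable_coe _ (measurableSet_singleton true)).ennreal_toReal, ?_⟩
  have h1 : (fun ω => e (X ω)) =ᵐ[P] P[f | MeasurableSpace.comap X inferInstance] := by
    rw [← hite]; exact hePS
  exact h1.trans (key.symm.trans hcd.symm)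
end

section
/- (Zadrozny selection identity) Let (X, Y, S) be random variables on X × Y × {0,1} drawn from distribution D with P(S=1 | X, Y) = P(S=1 | X) > 0 almost surely. Define the reweighted distribution D̂(x, y, s) := (P(S=1)/P(S=1|x)) · D(x, y, s). Then for every measurable classifier f and loss ℓ, E_D[ℓ(f(X), Y)] = E_{D̂}[ℓ(f(X), Y) | S = 1]. -/
open MeasureTheory ProbabilityTheory
open scoped ENNReal

/-- Zadrozny selection identity (equations (S20)–(S21)): if selection into the source set
depends only on the covariates, `P(S=1 | X, Y) = P(S=1 | X) = e(X) > 0` a.s., then the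
population risk equals the conditional risk under the reweighted distribution
`D̂ = (P(S=1)/P(S=1|x)) · D`, given `S = 1`. -/
theorem zadrozny_selection_identity
    {Ω 𝓧 𝓨 γ : Type*} [MeasurableSpace Ω]
    [MeasurableSpace 𝓧] [MeasurableSpace 𝓨] [MeasurableSpace γ]
    (P : Measure Ω) [IsProbabilityMeasure P]
    (X : Ω → 𝓧) (Y : Ω → 𝓨) (S : Ω → Bool)
    (hX : Measurable X) (hY : Measurable Y) (hS : Measurable S)
    (e : 𝓧 → ℝ) (he : Measurable e)
    -- P(S=1 | X, Y) = P(S=1 | X) = e(X): the conditional probability of selection given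
    -- both covariates and label is a function of the covariates alone
    (hePS : (fun ω => e (X ω)) =ᵐ[P]
      P[(fun ω => if S ω then (1 : ℝ) else 0)
        | MeasurableSpace.comap (fun ω => (X ω, Y ω)) inferInstance])
    -- P(S=1 | X) > 0 almost surely
    (hepos : ∀ᵐ ω ∂P, 0 < e (X ω))
    -- a measurable classifier f and nonnegative measurable loss ℓ
    (f : 𝓧 → γ) (hf : Measurable f)
    (ℓ : γ → 𝓨 → ℝ≥0∞) (hℓ : Measurable fun p : 𝓧 × 𝓨 => ℓ (f p.1) p.2) :
    -- E_D[ℓ(f(X), Y)] = E_{D̂}[ℓ(f(X), Y) | S = 1], where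
    -- D̂ = (P(S=1)/P(S=1|x)) · D is the reweighted distribution
    ∫⁻ ω, ℓ (f (X ω)) (Y ω) ∂P
      = ∫⁻ ω, ℓ (f (X ω)) (Y ω)
          ∂((P.withDensity
              (fun ω => P {ω' | S ω' = true} / ENNReal.ofReal (e (X ω))))[|{ω | S ω = true}]) := by
  classical
  set Z : Ω → 𝓧 × 𝓨 := fun ω => (X ω, Y ω) with hZdef
  have hZm : Measurable Z := hX.prodMk hY
  have hm : MeasurableSpace.comap Z inferInstance ≤ ‹MeasurableSpace Ω› := hZm.comap_le
  set A : Set Ω := {ω | S ω = true} with hAdef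
  have hAm : MeasurableSet A := hS (measurableSet_singleton true)
  have hind : (fun ω => if S ω then (1:ℝ) else 0) = A.indicator (fun _ => 1) := by
    funext ω; by_cases h : S ω = true <;> simp [Set.indicator, hAdef, h]
  have hSint : Integrable (fun ω => if S ω then (1:ℝ) else 0) P := by
    rw [hind]; exact (integrable_const (1:ℝ)).indicator hAm
  have heX_int : Integrable (fun ω => e (X ω)) P :=
    (integrable_condExp).congr hePS.symm
  have heXm : Measurable fun ω => ENNReal.ofReal (e (X ω)) :=
    (he.comp hX).ennreal_ofReal
  have hkeyset : ∀ B : Set (𝓧 × 𝓨), MeasurableSet B →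
      P (Z ⁻¹' B ∩ A) = ∫⁻ ω in Z ⁻¹' B, ENNReal.ofReal (e (X ω)) ∂P := by
    intro B hB
    have hsm : MeasurableSet[MeasurableSpace.comap Z inferInstance] (Z ⁻¹' B) := ⟨B, hB, rfl⟩
    have h1 : ∫ ω in Z ⁻¹' B, e (X ω) ∂P
        = ∫ ω in Z ⁻¹' B, (if S ω then (1:ℝ) else 0) ∂P := by
      rw [setIntegral_congr_ae (hm _ hsm) (hePS.mono fun ω h _ => h)]
      exact setIntegral_condExp hm hSint hsm
    have h2 : ∫ ω in Z ⁻¹' B, (if S ω then (1:ℝ) else 0) ∂P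
        = (P (Z ⁻¹' B ∩ A)).toReal := by
      rw [hind, integral_indicator hAm, setIntegral_const, measureReal_restrict_apply hAm,
        Set.inter_comm]
      simp [Measure.real]
    have h3 : ∫⁻ ω in Z ⁻¹' B, ENNReal.ofReal (e (X ω)) ∂P
        = ENNReal.ofReal (∫ ω in Z ⁻¹' B, e (X ω) ∂P) :=
      (ofReal_integral_eq_lintegral_ofReal (heX_int.restrict)
        (ae_restrict_of_ae (hepos.mono fun ω h => le_of_lt h))).symm
    rw [h3, h1, h2, ENNReal.ofReal_toReal (measure_ne_top _ _)]
  have key : ∀ g : 𝓧 × 𝓨 → ℝ≥0∞, Measurable g →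
      ∫⁻ ω in A, g (Z ω) ∂P = ∫⁻ ω, ENNReal.ofReal (e (X ω)) * g (Z ω) ∂P := by
    intro g hg
    have hμeq : (P.restrict A).map Z
        = (P.withDensity (fun ω => ENNReal.ofReal (e (X ω)))).map Z := by
      ext B hB
      rw [Measure.map_apply hZm hB, Measure.map_apply hZm hB,
        withDensity_apply _ (hZm hB), Measure.restrict_apply (hZm hB)]
      exact hkeyset B hB
    calc ∫⁻ ω in A, g (Z ω) ∂P
        = ∫⁻ p, g p ∂((P.restrict A).map Z) := (lintegral_map hg hZm).symm
      _ = ∫⁻ p, g p ∂((P.withDensity (fun ω => ENNReal.ofReal (e (X ω)))).map Z) := by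
          rw [hμeq]
      _ = ∫⁻ ω, g (Z ω) ∂(P.withDensity (fun ω => ENNReal.ofReal (e (X ω)))) :=
          lintegral_map hg hZm
      _ = ∫⁻ ω, ENNReal.ofReal (e (X ω)) * g (Z ω) ∂P := by
          have hgZ : Measurable fun ω => g (Z ω) := hg.comp hZm
          rw [lintegral_withDensity_eq_lintegral_mul _ heXm hgZ]; rfl
  set c : ℝ≥0∞ := P A with hcdef
  have hcne : c ≠ ∞ := measure_ne_top P A
  have haepos : ∀ᵐ ω ∂P, ENNReal.ofReal (e (X ω)) ≠ 0 ∧ ENNReal.ofReal (e (X ω)) ≠ ∞ :=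
    hepos.mono fun ω h => ⟨(ENNReal.ofReal_pos.mpr h).ne', ENNReal.ofReal_ne_top⟩
  have hc0 : c ≠ 0 := by
    intro h0
    have h1 : ∫⁻ ω, ENNReal.ofReal (e (X ω)) ∂P = 0 := by
      have := key (fun _ => 1) measurable_const
      simpa [setLIntegral_one, ← hcdef, h0] using this.symm
    have h2 : ∀ᵐ ω ∂P, ENNReal.ofReal (e (X ω)) = 0 :=
      (lintegral_eq_zero_iff heXm).mp h1
    have hfalse : ∀ᵐ ω ∂P, False := by
      filter_upwards [h2, haepos] with ω hz hp using hp.1 hz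
    obtain ⟨ω, h⟩ := hfalse.exists
    exact h
  set w : Ω → ℝ≥0∞ := fun ω => c / ENNReal.ofReal (e (X ω)) with hwdef
  have hwm : Measurable w := measurable_const.div heXm
  have hνA : (P.withDensity w) A = c := by
    rw [withDensity_apply _ hAm]
    have := key (fun p => c / ENNReal.ofReal (e p.1)) (measurable_const.div
      (he.comp measurable_fst).ennreal_ofReal)
    calc ∫⁻ ω in A, w ω ∂P
        = ∫⁻ ω, ENNReal.ofReal (e (X ω)) * (c / ENNReal.ofReal (e (X ω))) ∂P := this
      _ = ∫⁻ _ω, c ∂P := by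
          refine lintegral_congr_ae ?_
          filter_upwards [haepos] with ω hp using ENNReal.mul_div_cancel hp.1 hp.2
      _ = c := by simp
  have hrest : ∫⁻ ω, ℓ (f (X ω)) (Y ω) ∂((P.withDensity w).restrict A)
      = c * ∫⁻ ω, ℓ (f (X ω)) (Y ω) ∂P := by
    have hLm : Measurable fun ω => ℓ (f (X ω)) (Y ω) := hℓ.comp hZm
    rw [restrict_withDensity hAm,
      lintegral_withDensity_eq_lintegral_mul _ hwm hLm]
    have hkey := key (fun p => (c / ENNReal.ofReal (e p.1)) * ℓ (f p.1) p.2)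
      ((measurable_const.div (he.comp measurable_fst).ennreal_ofReal).mul hℓ)
    calc ∫⁻ ω in A, (w * fun ω => ℓ (f (X ω)) (Y ω)) ω ∂P
        = ∫⁻ ω, ENNReal.ofReal (e (X ω)) *
            ((c / ENNReal.ofReal (e (X ω))) * ℓ (f (X ω)) (Y ω)) ∂P := hkey
      _ = ∫⁻ ω, c * ℓ (f (X ω)) (Y ω) ∂P := by
          refine lintegral_congr_ae ?_
          filter_upwards [haepos] with ω hp
          rw [← mul_assoc, mul_comm (ENNReal.ofReal (e (X ω))) (c / _),
            ENNReal.div_mul_cancel hp.1 hp.2]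
      _ = c * ∫⁻ ω, ℓ (f (X ω)) (Y ω) ∂P := lintegral_const_mul c (hℓ.comp hZm)
  rw [ProbabilityTheory.cond, lintegral_smul_measure, hνA, hrest, smul_eq_mul, ← mul_assoc,
    ENNReal.inv_mul_cancel hc0 hcne, one_mul]
end

section
/- Under covariate shift and 0 < e(X) < 1 a.s., the outcome distributions given the propensity score are equal between domains: the conditional law of Y given e(X) on {S=1} equals the conditional law of Y given e(X) on {S=0}; in particular E[Y | e(X), S=1] = E[Y | e(X), S=0] a.s. (for integrable Y). -/
open MeasureTheory ProbabilityTheory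
open scoped ENNReal

/-- Remark 1 (conclusion): under covariate shift and `0 < e(X) < 1` a.s., the conditional law
of the outcome `Y` given the propensity score `e(X)` is the same in the source (`S = 1`) and
target (`S = 0`) domains; in particular the conditional means agree almost surely. -/
theorem outcome_balance_given_propensity
    {Ω 𝓧 : Type*} [MeasurableSpace Ω]
    [MeasurableSpace 𝓧] [StandardBorelSpace 𝓧] [Nonempty 𝓧]
    (P : Measure Ω) [IsProbabilityMeasure P]
    (X : Ω → 𝓧) (Y : Ω → ℝ) (S : Ω → Bool)
    (hX : Measurable X) (hY : Measurable Y) (hS : Measurable S)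
    (hS1 : P {ω | S ω = true} ≠ 0) (hS0 : P {ω | S ω = false} ≠ 0)
    (hYint : Integrable Y P)
    (e : 𝓧 → ℝ) (he : Measurable e)
    -- e(X) is a version of the propensity score P(S = 1 | X)
    (hePS : (fun ω => e (X ω)) =ᵐ[P]
      P[(fun ω => if S ω then (1 : ℝ) else 0) | MeasurableSpace.comap X inferInstance])
    -- 0 < e(X) < 1 almost surely
    (he01 : ∀ᵐ ω ∂P, e (X ω) ∈ Set.Ioo (0 : ℝ) 1)
    -- covariate shift: the conditional law of Y given X is the same on {S=1} and {S=0}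
    (hCS : ∀ᵐ x ∂(P.map X),
      condDistrib Y X (P[|{ω | S ω = true}]) x = condDistrib Y X (P[|{ω | S ω = false}]) x) :
    -- conclusion: same conditional law of Y given e(X) in both domains,
    -- and in particular equal conditional means
    (∀ᵐ t ∂(P.map (fun ω => e (X ω))),
        condDistrib Y (fun ω => e (X ω)) (P[|{ω | S ω = true}]) t
          = condDistrib Y (fun ω => e (X ω)) (P[|{ω | S ω = false}]) t)
    ∧ (∀ᵐ t ∂(P.map (fun ω => e (X ω))),
        (∫ y, y ∂(condDistrib Y (fun ω => e (X ω)) (P[|{ω | S ω = true}]) t))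
          = ∫ y, y ∂(condDistrib Y (fun ω => e (X ω)) (P[|{ω | S ω = false}]) t)) := by
  classical
  have hmS1 : MeasurableSet {ω | S ω = true} := hS (measurableSet_singleton true)
  have hmS0 : MeasurableSet {ω | S ω = false} := hS (measurableSet_singleton false)
  haveI hP1 : IsProbabilityMeasure (P[|{ω | S ω = true}]) := cond_isProbabilityMeasure hS1
  haveI hP0 : IsProbabilityMeasure (P[|{ω | S ω = false}]) := cond_isProbabilityMeasure hS0
  set μ1 := P[|{ω | S ω = true}] with hμ1def
  set μ0 := P[|{ω | S ω = false}] with hμ0def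
  set T : Ω → ℝ := fun ω => e (X ω) with hTdef
  have hTm : Measurable T := he.comp hX
  set ρ := P.map T with hρdef
  set PX := P.map X with hPXdef
  haveI : IsProbabilityMeasure ρ := Measure.isProbabilityMeasure_map hTm.aemeasurable
  haveI : IsProbabilityMeasure PX := Measure.isProbabilityMeasure_map hX.aemeasurable
  have hρPX : ρ = PX.map e := by
    rw [hρdef, hPXdef, Measure.map_map he hX]; rfl
  have hPXIoo : ∀ᵐ x ∂PX, e x ∈ Set.Ioo (0 : ℝ) 1 := by
    rw [hPXdef]
    exact (ae_map_iff hX.aemeasurable (he measurableSet_Ioo)).mpr he01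
  have hρIoo : ∀ᵐ t ∂ρ, t ∈ Set.Ioo (0 : ℝ) 1 := by
    rw [hρdef]
    exact (ae_map_iff hTm.aemeasurable measurableSet_Ioo).mpr he01
  have heint : Integrable e PX := by
    refine Integrable.mono' (integrable_const (1 : ℝ)) he.aestronglyMeasurable ?_
    filter_upwards [hPXIoo] with x hx
    rw [Real.norm_eq_abs, abs_of_pos hx.1]
    exact hx.2.le
  have hfeq : (fun ω => if S ω then (1 : ℝ) else 0)
      = {ω | S ω = true}.indicator (fun _ => (1 : ℝ)) := by
    funext ω; by_cases h : S ω <;> simp [h, Set.indicator]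
  rw [hfeq] at hePS
  -- Fact 1: the propensity score is a density for the source population on X-space
  have fact1 : ∀ C : Set 𝓧, MeasurableSet C →
      P (X ⁻¹' C ∩ {ω | S ω = true}) = ∫⁻ x in C, ENNReal.ofReal (e x) ∂PX := by
    intro C hC
    have hm : MeasurableSpace.comap X inferInstance ≤ (inferInstance : MeasurableSpace Ω) :=
      hX.comap_le
    have hCm : MeasurableSet[MeasurableSpace.comap X inferInstance] (X ⁻¹' C) := ⟨C, hC, rfl⟩
    have hfint : Integrable ({ω | S ω = true}.indicator (fun _ => (1 : ℝ))) P :=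
      (integrable_const (1 : ℝ)).indicator hmS1
    have h1 : ∫ ω in X ⁻¹' C, ({ω | S ω = true}.indicator (fun _ => (1 : ℝ))) ω ∂P
        = (P (X ⁻¹' C ∩ {ω | S ω = true})).toReal := by
      rw [setIntegral_indicator hmS1, setIntegral_const, smul_eq_mul, mul_one]
      rfl
    have hreal : ∫ ω in X ⁻¹' C, e (X ω) ∂P = (P (X ⁻¹' C ∩ {ω | S ω = true})).toReal := by
      rw [← h1, ← setIntegral_condExp hm hfint hCm]
      exact integral_congr_ae (ae_restrict_of_ae hePS)
    have hr2 : ∫ ω in X ⁻¹' C, e (X ω) ∂P = ∫ x in C, e x ∂PX := by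
      rw [hPXdef]
      exact (setIntegral_map hC he.aestronglyMeasurable hX.aemeasurable).symm
    rw [← ENNReal.ofReal_toReal (measure_ne_top P (X ⁻¹' C ∩ {ω | S ω = true})), ← hreal, hr2,
      ofReal_integral_eq_lintegral_ofReal heint.restrict
        (ae_restrict_of_ae (hPXIoo.mono fun x hx => hx.1.le))]
  have fact0 : ∀ C : Set 𝓧, MeasurableSet C →
      P (X ⁻¹' C ∩ {ω | S ω = false}) = ∫⁻ x in C, (1 - ENNReal.ofReal (e x)) ∂PX := by
    intro C hC
    have hS0c : {ω | S ω = false} = {ω | S ω = true}ᶜ := by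
      ext ω; by_cases h : S ω <;> simp [h]
    have hdiff : X ⁻¹' C ∩ {ω | S ω = false} = X ⁻¹' C \ (X ⁻¹' C ∩ {ω | S ω = true}) := by
      rw [hS0c]; ext ω; by_cases h : S ω <;> simp [h]
    have hle : ∀ᵐ x ∂PX.restrict C, ENNReal.ofReal (e x) ≤ 1 :=
      ae_restrict_of_ae (hPXIoo.mono fun x hx => ENNReal.ofReal_le_one.mpr hx.2.le)
    have hfin : (∫⁻ x in C, ENNReal.ofReal (e x) ∂PX) ≠ ∞ := by
      refine ne_of_lt (lt_of_le_of_lt (lintegral_mono_ae hle) ?_)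
      simp only [lintegral_one, Measure.restrict_apply_univ]
      exact measure_lt_top _ _
    have hPXC : P (X ⁻¹' C) = ∫⁻ _x in C, 1 ∂PX := by
      rw [setLIntegral_one, hPXdef, Measure.map_apply hX hC]
    rw [hdiff, measure_diff Set.inter_subset_left ((hX hC).inter hmS1).nullMeasurableSet
        (measure_ne_top P _), fact1 C hC,
      lintegral_sub he.ennreal_ofReal hfin hle, hPXC]
  -- the X-marginals of the two populations as densities w.r.t. PX
  have hMap1 : Measure.map X μ1
      = (P {ω | S ω = true})⁻¹ • PX.withDensity (fun x => ENNReal.ofReal (e x)) := by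
    refine Measure.ext fun C hC => ?_
    rw [Measure.map_apply hX hC, hμ1def, cond_apply hmS1, Set.inter_comm, fact1 C hC,
      Measure.smul_apply, withDensity_apply _ hC, smul_eq_mul]
  have hMap0 : Measure.map X μ0
      = (P {ω | S ω = false})⁻¹ • PX.withDensity (fun x => 1 - ENNReal.ofReal (e x)) := by
    refine Measure.ext fun C hC => ?_
    rw [Measure.map_apply hX hC, hμ0def, cond_apply hmS0, Set.inter_comm, fact0 C hC,
      Measure.smul_apply, withDensity_apply _ hC, smul_eq_mul]
  -- laws of the propensity score in the two populations
  have hMapT1 : Measure.map T μ1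
      = (P {ω | S ω = true})⁻¹ • ρ.withDensity (fun t => ENNReal.ofReal t) := by
    refine Measure.ext fun B hB => ?_
    rw [Measure.map_apply hTm hB, hμ1def, cond_apply hmS1, Set.inter_comm]
    have h1 : T ⁻¹' B = X ⁻¹' (e ⁻¹' B) := rfl
    rw [h1, fact1 _ (he hB), Measure.smul_apply, withDensity_apply _ hB, smul_eq_mul, hρPX,
      setLIntegral_map hB ENNReal.measurable_ofReal he]
  have hMapT0 : Measure.map T μ0
      = (P {ω | S ω = false})⁻¹ • ρ.withDensity (fun t => 1 - ENNReal.ofReal t) := by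
    refine Measure.ext fun B hB => ?_
    rw [Measure.map_apply hTm hB, hμ0def, cond_apply hmS0, Set.inter_comm]
    have h1 : T ⁻¹' B = X ⁻¹' (e ⁻¹' B) := rfl
    rw [h1, fact0 _ (he hB), Measure.smul_apply, withDensity_apply _ hB, smul_eq_mul, hρPX,
      setLIntegral_map hB (ENNReal.measurable_ofReal.const_sub 1) he]
  have key : ∀ q : ℚ, ∀ᵐ t ∂ρ,
      condDistrib Y T μ1 t (Set.Iic (q : ℝ)) = condDistrib Y T μ0 t (Set.Iic (q : ℝ)) := by
    intro q
    set A : Set ℝ := Set.Iic (q : ℝ) with hAdef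
    have hA : MeasurableSet A := measurableSet_Iic
    have hw1 : Measurable fun t => condDistrib Y T μ1 t A := Kernel.measurable_coe _ hA
    have hw0 : Measurable fun t => condDistrib Y T μ0 t A := Kernel.measurable_coe _ hA
    have hg1 : Measurable fun x => condDistrib Y X μ1 x A := Kernel.measurable_coe _ hA
    have hg0 : Measurable fun x => condDistrib Y X μ0 x A := Kernel.measurable_coe _ hA
    have hc1 : (P {ω | S ω = true})⁻¹ ≠ 0 := ENNReal.inv_ne_zero.mpr (measure_ne_top P _)
    have hc1' : (P {ω | S ω = true})⁻¹ ≠ ⊤ := ENNReal.inv_ne_top.mpr hS1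
    have hc0 : (P {ω | S ω = false})⁻¹ ≠ 0 := ENNReal.inv_ne_zero.mpr (measure_ne_top P _)
    have hc0' : (P {ω | S ω = false})⁻¹ ≠ ⊤ := ENNReal.inv_ne_top.mpr hS0
    have E1 : ∀ B : Set ℝ, MeasurableSet B →
        ∫⁻ t in B, ENNReal.ofReal t * condDistrib Y T μ1 t A ∂ρ
          = ∫⁻ x in e ⁻¹' B, ENNReal.ofReal (e x) * condDistrib Y X μ1 x A ∂PX := by
      intro B hB
      have hL : ∫⁻ t in B, condDistrib Y T μ1 t A ∂(Measure.map T μ1)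
          = (P {ω | S ω = true})⁻¹
              * ∫⁻ t in B, ENNReal.ofReal t * condDistrib Y T μ1 t A ∂ρ := by
        rw [hMapT1]
        simp only [Measure.restrict_smul, lintegral_smul_measure]
        rw [setLIntegral_withDensity_eq_setLIntegral_mul ρ ENNReal.measurable_ofReal hw1 hB]
        simp only [Pi.mul_apply, smul_eq_mul]
      have hL' : ∫⁻ t in B, condDistrib Y T μ1 t A ∂(Measure.map T μ1)
          = μ1 (T ⁻¹' B ∩ Y ⁻¹' A) := by
        rw [setLIntegral_map hB hw1 hTm]
        exact setLIntegral_preimage_condDistrib hTm hY.aemeasurable hA hB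
      have hR : ∫⁻ x in e ⁻¹' B, condDistrib Y X μ1 x A ∂(Measure.map X μ1)
          = (P {ω | S ω = true})⁻¹
              * ∫⁻ x in e ⁻¹' B, ENNReal.ofReal (e x) * condDistrib Y X μ1 x A ∂PX := by
        rw [hMap1]
        simp only [Measure.restrict_smul, lintegral_smul_measure]
        rw [setLIntegral_withDensity_eq_setLIntegral_mul PX he.ennreal_ofReal hg1 (he hB)]
        simp only [Pi.mul_apply, smul_eq_mul]
      have hR' : ∫⁻ x in e ⁻¹' B, condDistrib Y X μ1 x A ∂(Measure.map X μ1)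
          = μ1 (X ⁻¹' (e ⁻¹' B) ∩ Y ⁻¹' A) := by
        rw [setLIntegral_map (he hB) hg1 hX]
        exact setLIntegral_preimage_condDistrib hX hY.aemeasurable hA (he hB)
      have hTB : T ⁻¹' B = X ⁻¹' (e ⁻¹' B) := rfl
      have hmain : (P {ω | S ω = true})⁻¹
            * (∫⁻ t in B, ENNReal.ofReal t * condDistrib Y T μ1 t A ∂ρ)
          = (P {ω | S ω = true})⁻¹
            * ∫⁻ x in e ⁻¹' B, ENNReal.ofReal (e x) * condDistrib Y X μ1 x A ∂PX := by
        rw [← hL, hL', hTB, ← hR, hR']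
      exact (ENNReal.mul_right_inj hc1 hc1').mp hmain
    have E0 : ∀ B : Set ℝ, MeasurableSet B →
        ∫⁻ t in B, (1 - ENNReal.ofReal t) * condDistrib Y T μ0 t A ∂ρ
          = ∫⁻ x in e ⁻¹' B, (1 - ENNReal.ofReal (e x)) * condDistrib Y X μ0 x A ∂PX := by
      intro B hB
      have hL : ∫⁻ t in B, condDistrib Y T μ0 t A ∂(Measure.map T μ0)
          = (P {ω | S ω = false})⁻¹
              * ∫⁻ t in B, (1 - ENNReal.ofReal t) * condDistrib Y T μ0 t A ∂ρ := by
        rw [hMapT0]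
        simp only [Measure.restrict_smul, lintegral_smul_measure]
        rw [setLIntegral_withDensity_eq_setLIntegral_mul ρ
          (ENNReal.measurable_ofReal.const_sub 1) hw0 hB]
        simp only [Pi.mul_apply, smul_eq_mul]
      have hL' : ∫⁻ t in B, condDistrib Y T μ0 t A ∂(Measure.map T μ0)
          = μ0 (T ⁻¹' B ∩ Y ⁻¹' A) := by
        rw [setLIntegral_map hB hw0 hTm]
        exact setLIntegral_preimage_condDistrib hTm hY.aemeasurable hA hB
      have hR : ∫⁻ x in e ⁻¹' B, condDistrib Y X μ0 x A ∂(Measure.map X μ0)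
          = (P {ω | S ω = false})⁻¹
              * ∫⁻ x in e ⁻¹' B, (1 - ENNReal.ofReal (e x)) * condDistrib Y X μ0 x A ∂PX := by
        rw [hMap0]
        simp only [Measure.restrict_smul, lintegral_smul_measure]
        rw [setLIntegral_withDensity_eq_setLIntegral_mul PX
          (he.ennreal_ofReal.const_sub 1) hg0 (he hB)]
        simp only [Pi.mul_apply, smul_eq_mul]
      have hR' : ∫⁻ x in e ⁻¹' B, condDistrib Y X μ0 x A ∂(Measure.map X μ0)
          = μ0 (X ⁻¹' (e ⁻¹' B) ∩ Y ⁻¹' A) := by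
        rw [setLIntegral_map (he hB) hg0 hX]
        exact setLIntegral_preimage_condDistrib hX hY.aemeasurable hA (he hB)
      have hTB : T ⁻¹' B = X ⁻¹' (e ⁻¹' B) := rfl
      have hmain : (P {ω | S ω = false})⁻¹
            * (∫⁻ t in B, (1 - ENNReal.ofReal t) * condDistrib Y T μ0 t A ∂ρ)
          = (P {ω | S ω = false})⁻¹
            * ∫⁻ x in e ⁻¹' B, (1 - ENNReal.ofReal (e x)) * condDistrib Y X μ0 x A ∂PX := by
        rw [← hL, hL', hTB, ← hR, hR']
      exact (ENNReal.mul_right_inj hc0 hc0').mp hmain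
    have hCSA : ∀ᵐ x ∂PX, condDistrib Y X μ0 x A = condDistrib Y X μ1 x A :=
      hCS.mono fun x hx => by rw [hx]
    have E0' : ∀ B : Set ℝ, MeasurableSet B →
        ∫⁻ t in B, (1 - ENNReal.ofReal t) * condDistrib Y T μ0 t A ∂ρ
          = ∫⁻ x in e ⁻¹' B, (1 - ENNReal.ofReal (e x)) * condDistrib Y X μ1 x A ∂PX := by
      intro B hB
      rw [E0 B hB]
      refine lintegral_congr_ae (ae_restrict_of_ae ?_)
      filter_upwards [hCSA] with x hx
      rw [hx]
    set σm : Measure ℝ := (PX.withDensity (fun x => condDistrib Y X μ1 x A)).map e with hσdef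
    have hσ1 : ∀ B : Set ℝ, MeasurableSet B →
        (∫⁻ t in B, ENNReal.ofReal t ∂σm)
          = ∫⁻ x in e ⁻¹' B, ENNReal.ofReal (e x) * condDistrib Y X μ1 x A ∂PX := by
      intro B hB
      rw [hσdef, setLIntegral_map hB ENNReal.measurable_ofReal he,
        setLIntegral_withDensity_eq_setLIntegral_mul PX hg1 he.ennreal_ofReal (he hB)]
      simp only [Pi.mul_apply]
      exact lintegral_congr fun x => mul_comm _ _
    have hσ0 : ∀ B : Set ℝ, MeasurableSet B →
        (∫⁻ t in B, (1 - ENNReal.ofReal t) ∂σm)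
          = ∫⁻ x in e ⁻¹' B, (1 - ENNReal.ofReal (e x)) * condDistrib Y X μ1 x A ∂PX := by
      intro B hB
      rw [hσdef, setLIntegral_map hB (ENNReal.measurable_ofReal.const_sub 1) he,
        setLIntegral_withDensity_eq_setLIntegral_mul PX hg1
          (he.ennreal_ofReal.const_sub 1) (he hB)]
      simp only [Pi.mul_apply]
      exact lintegral_congr fun x => mul_comm _ _
    have hM1 : ρ.withDensity
          (fun t => ENNReal.ofReal t * condDistrib Y T μ1 t A)
        = σm.withDensity (fun t => ENNReal.ofReal t) := by
      refine Measure.ext fun B hB => ?_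
      rw [withDensity_apply _ hB, withDensity_apply _ hB]
      exact (E1 B hB).trans (hσ1 B hB).symm
    have hM0 : ρ.withDensity
          (fun t => (1 - ENNReal.ofReal t) * condDistrib Y T μ0 t A)
        = σm.withDensity (fun t => 1 - ENNReal.ofReal t) := by
      refine Measure.ext fun B hB => ?_
      rw [withDensity_apply _ hB, withDensity_apply _ hB]
      exact (E0' B hB).trans (hσ0 B hB).symm
    have comp1 : ρ.withDensity
          (fun t => (ENNReal.ofReal t * condDistrib Y T μ1 t A) * (1 - ENNReal.ofReal t))
        = σm.withDensity (fun t => ENNReal.ofReal t * (1 - ENNReal.ofReal t)) := by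
      have h := withDensity_mul (μ := ρ)
        (f := fun t => ENNReal.ofReal t * condDistrib Y T μ1 t A)
        (g := fun t => 1 - ENNReal.ofReal t)
        (ENNReal.measurable_ofReal.mul hw1) (ENNReal.measurable_ofReal.const_sub 1)
      have h2 := withDensity_mul (μ := σm) (f := fun t : ℝ => ENNReal.ofReal t)
        (g := fun t => 1 - ENNReal.ofReal t)
        ENNReal.measurable_ofReal (ENNReal.measurable_ofReal.const_sub 1)
      rw [hM1] at h
      exact h.trans h2.symm
    have comp0 : ρ.withDensity
          (fun t => ((1 - ENNReal.ofReal t) * condDistrib Y T μ0 t A) * ENNReal.ofReal t)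
        = σm.withDensity (fun t => (1 - ENNReal.ofReal t) * ENNReal.ofReal t) := by
      have h := withDensity_mul (μ := ρ)
        (f := fun t => (1 - ENNReal.ofReal t) * condDistrib Y T μ0 t A)
        (g := fun t : ℝ => ENNReal.ofReal t)
        ((ENNReal.measurable_ofReal.const_sub 1).mul hw0) ENNReal.measurable_ofReal
      have h2 := withDensity_mul (μ := σm) (f := fun t : ℝ => 1 - ENNReal.ofReal t)
        (g := fun t : ℝ => ENNReal.ofReal t)
        (ENNReal.measurable_ofReal.const_sub 1) ENNReal.measurable_ofReal
      rw [hM0] at h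
      exact h.trans h2.symm
    have heqm : ρ.withDensity
          (fun t => (ENNReal.ofReal t * condDistrib Y T μ1 t A) * (1 - ENNReal.ofReal t))
        = ρ.withDensity
          (fun t => ((1 - ENNReal.ofReal t) * condDistrib Y T μ0 t A) * ENNReal.ofReal t) := by
      rw [comp1, comp0]
      exact congrArg _ (funext fun t => mul_comm _ _)
    have hae := (withDensity_eq_iff_of_sigmaFinite
      (((ENNReal.measurable_ofReal.mul hw1).mul
        (ENNReal.measurable_ofReal.const_sub 1)).aemeasurable)
      ((((ENNReal.measurable_ofReal.const_sub 1).mul hw0).mul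
        ENNReal.measurable_ofReal).aemeasurable)).mp heqm
    filter_upwards [hae, hρIoo] with t ht hI
    have h1 : ENNReal.ofReal t ≠ 0 := (ENNReal.ofReal_pos.mpr hI.1).ne'
    have h2 : ENNReal.ofReal t ≠ ⊤ := ENNReal.ofReal_ne_top
    have h3 : 1 - ENNReal.ofReal t ≠ 0 := by
      intro h
      exact absurd (tsub_eq_zero_iff_le.mp h) (not_le.mpr (ENNReal.ofReal_lt_one.mpr hI.2))
    have h4 : 1 - ENNReal.ofReal t ≠ ⊤ := ne_top_of_le_ne_top ENNReal.one_ne_top tsub_le_self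
    have ht' : (ENNReal.ofReal t * (1 - ENNReal.ofReal t)) * condDistrib Y T μ1 t A
        = (ENNReal.ofReal t * (1 - ENNReal.ofReal t)) * condDistrib Y T μ0 t A := by
      calc (ENNReal.ofReal t * (1 - ENNReal.ofReal t)) * condDistrib Y T μ1 t A
          = ENNReal.ofReal t * condDistrib Y T μ1 t A * (1 - ENNReal.ofReal t) := by ring
        _ = (1 - ENNReal.ofReal t) * condDistrib Y T μ0 t A * ENNReal.ofReal t := ht
        _ = (ENNReal.ofReal t * (1 - ENNReal.ofReal t)) * condDistrib Y T μ0 t A := by ring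
    exact (ENNReal.mul_right_inj (mul_ne_zero h1 h3) (ENNReal.mul_ne_top h2 h4)).mp ht'
  have keyAll : ∀ᵐ t ∂ρ, ∀ q : ℚ,
      condDistrib Y T μ1 t (Set.Iic (q : ℝ)) = condDistrib Y T μ0 t (Set.Iic (q : ℝ)) :=
    ae_all_iff.mpr key
  have main : ∀ᵐ t ∂ρ, condDistrib Y T μ1 t = condDistrib Y T μ0 t := by
    filter_upwards [keyAll] with t ht
    refine ext_of_generate_finite _
      ((BorelSpace.measurable_eq (α := ℝ)).trans Real.borel_eq_generateFrom_Iic_rat)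
      Real.isPiSystem_Iic_rat ?_ ?_
    · intro s hs
      obtain ⟨_, ⟨q, rfl⟩, hq⟩ := hs
      simp only [Set.mem_singleton_iff] at hq
      subst hq
      exact ht q
    · simp [measure_univ]
  exact ⟨main, main.mono fun t ht => by rw [ht]⟩
end
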